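/- For tubal matrices A ∈ ℝ^{m₁×n₁×l} and B ∈ ℝ^{m₂×n₂×l}, the Frobenius norm of their t-Kronecker product satisfies ‖A ⊗_t B‖_F² = (1/l) Σ_{k=1}^{l} ‖Â_(k)‖_F² ‖B̂_(k)‖_F², where Â and B̂ denote the discrete Fourier transforms of A and B along the third dimension. -/

import Mathlib

open scoped Matrix Kronecker BigOperators
open MeasureTheory
open scoped ProbabilityTheory

/-- The t-product of two tubal matrices (third-order tensors given by their
frontal slices): `(A*B)_k = ∑_{k'} A_{k-k'} B_{k'}` (circular convolution of slices),
equivalently `A*B = fold(bcirc(A) · unfold(B))`. -/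
def tProd {α β γ : Type*} [Fintype β] {l : ℕ}
    (A : Fin l → Matrix α β ℝ) (B : Fin l → Matrix β γ ℝ) :
    Fin l → Matrix α γ ℝ :=
  fun k => ∑ k' : Fin l, A (k - k') * B k'

/-- The block-circulant matrix of a tubal matrix: the `(a,b)` block is `A_{a-b mod l}`. -/
def bcirc {α β : Type*} {l : ℕ} (A : Fin l → Matrix α β ℝ) :
    Matrix (α × Fin l) (β × Fin l) ℝ :=
  Matrix.of fun p q => A (p.2 - q.2) p.1 q.1

/-- Squared Frobenius norm of a tubal matrix (third-order tensor). -/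
def frobSq {α β : Type*} [Fintype α] [Fintype β] {l : ℕ}
    (A : Fin l → Matrix α β ℝ) : ℝ :=
  ∑ k, ∑ i, ∑ j, (A k i j) ^ 2

/-- Squared Frobenius norm of a real matrix. -/
def matFrobSq {α β : Type*} [Fintype α] [Fintype β] (M : Matrix α β ℝ) : ℝ :=
  ∑ i, ∑ j, (M i j) ^ 2

/-- Tensor transpose under the t-product: transpose each frontal slice and reverse
the order of slices 2 through l, i.e. `(Aᵀ)_k = (A_{-k})ᵀ`. -/
def ttr {α β : Type*} {l : ℕ} (A : Fin l → Matrix α β ℝ) :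
    Fin l → Matrix β α ℝ :=
  fun k => (A (-k))ᵀ

/-- Slice transpose: transpose each frontal slice (no reversal). -/
def sliceT {α β : Type*} {l : ℕ} (A : Fin l → Matrix α β ℝ) :
    Fin l → Matrix β α ℝ :=
  fun k => (A k)ᵀ

/-- Reverse: reverse the order of frontal slices 2 through l. -/
def trev {α β : Type*} {l : ℕ} (A : Fin l → Matrix α β ℝ) :
    Fin l → Matrix α β ℝ :=
  fun k => A (-k)

/-- t-Kronecker product of tubal matrices: `(A ⊗_t B)_k = ∑_{k'} A_{k-k'} ⊗ B_{k'}`,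
the block tubal matrix whose `(i,j)` block is `A_{(i,j,:)} * B`. -/
def tkron {α β γ δ : Type*} {l : ℕ}
    (A : Fin l → Matrix α β ℝ) (B : Fin l → Matrix γ δ ℝ) :
    Fin l → Matrix (α × γ) (β × δ) ℝ :=
  fun k => ∑ k' : Fin l, (A (k - k')) ⊗ₖ (B k')

/-- The identity tubal matrix: first frontal slice is the identity, others zero. -/
def tId (α : Type*) [DecidableEq α] [Fintype α] (l : ℕ) [NeZero l] :
    Fin l → Matrix α α ℝ :=
  fun k => if k = 0 then (1 : Matrix α α ℝ) else 0

/-- t-vectorization: stack the lateral slices of a tubal matrix vertically. -/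
def vecT {α β : Type*} {l : ℕ} (B : Fin l → Matrix α β ℝ) :
    Fin l → Matrix (β × α) (Fin 1) ℝ :=
  fun k => Matrix.of fun p _ => B k p.2 p.1

/-- Discrete Fourier transform along the third dimension:
`Â_k = ∑_j exp(-2πi·jk/l) A_j`. -/
noncomputable def dft {α β : Type*} {l : ℕ} (A : Fin l → Matrix α β ℝ) :
    Fin l → Matrix α β ℂ :=
  fun k => ∑ j : Fin l,
    Complex.exp (-(2 * (Real.pi : ℂ) * Complex.I * (j.1 : ℂ) * (k.1 : ℂ)) / (l : ℂ)) •
      (A j).map Complex.ofReal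

/-- Squared Frobenius norm of a complex matrix. -/
def matFrobSqC {α β : Type*} [Fintype α] [Fintype β] (M : Matrix α β ℂ) : ℝ :=
  ∑ i, ∑ j, Complex.normSq (M i j)

section Aux

open Complex

/-- The DFT kernel. -/
noncomputable def dftKer (l : ℕ) (j k : Fin l) : ℂ :=
  Complex.exp (-(2 * (Real.pi : ℂ) * Complex.I * (j.1 : ℂ) * (k.1 : ℂ)) / (l : ℂ))

/-- The basic root of unity. -/
noncomputable def dftZeta (l : ℕ) : ℂ :=
  Complex.exp (-(2 * (Real.pi : ℂ) * Complex.I) / (l : ℂ))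

lemma dftKer_eq_pow (l : ℕ) (j k : Fin l) :
    dftKer l j k = dftZeta l ^ (j.1 * k.1) := by
  rw [dftZeta, dftKer, ← Complex.exp_nat_mul]
  congr 1
  push_cast
  ring

lemma dftZeta_pow_l (l : ℕ) [NeZero l] : dftZeta l ^ l = 1 := by
  rw [dftZeta, ← Complex.exp_nat_mul]
  have hl : (l : ℂ) ≠ 0 := Nat.cast_ne_zero.mpr (NeZero.ne l)
  rw [mul_div_assoc', mul_comm, mul_div_assoc, div_self hl, mul_one, Complex.exp_neg,
    Complex.exp_two_pi_mul_I, inv_one]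

lemma dftZeta_isPrimitiveRoot (l : ℕ) [NeZero l] : IsPrimitiveRoot (dftZeta l) l := by
  have h := (Complex.isPrimitiveRoot_exp l (NeZero.ne l)).inv
  have : dftZeta l = (Complex.exp (2 * Real.pi * Complex.I / l))⁻¹ := by
    rw [← Complex.exp_neg, dftZeta, neg_div]
  rwa [this]

lemma dftZeta_pow_mod (l : ℕ) [NeZero l] (a : ℕ) :
    dftZeta l ^ a = dftZeta l ^ (a % l) := by
  conv_lhs => rw [← Nat.div_add_mod a l]
  rw [pow_add, pow_mul, dftZeta_pow_l, one_pow, one_mul]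

lemma dftKer_add (l : ℕ) [NeZero l] (j j' k : Fin l) :
    dftKer l (j + j') k = dftKer l j k * dftKer l j' k := by
  rw [dftKer_eq_pow, dftKer_eq_pow, dftKer_eq_pow, ← pow_add, ← add_mul]
  have hv : ((j + j' : Fin l) : ℕ) = (j.1 + j'.1) % l := Fin.add_def j j' ▸ rfl
  rw [hv, dftZeta_pow_mod l (((j.1 + j'.1) % l) * k.1), dftZeta_pow_mod l ((j.1 + j'.1) * k.1),
    Nat.mod_mul_mod]

lemma dftKer_orth (l : ℕ) [NeZero l] (j j' : Fin l) :
    ∑ k : Fin l, dftKer l j k * (starRingEnd ℂ) (dftKer l j' k)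
      = if j = j' then (l : ℂ) else 0 := by
  have hζ := dftZeta_isPrimitiveRoot l
  have hne : dftZeta l ≠ 0 := hζ.ne_zero (NeZero.ne l)
  have hconj : (starRingEnd ℂ) (dftZeta l) = (dftZeta l)⁻¹ := by
    rw [dftZeta, ← Complex.exp_conj, ← Complex.exp_neg]
    congr 1
    rw [map_div₀, map_neg]
    simp only [map_mul, Complex.conj_I, Complex.conj_ofReal, map_ofNat, map_natCast]
    ring
  set η : ℂ := dftZeta l ^ j.1 * (dftZeta l ^ j'.1)⁻¹ with hη
  have hterm : ∀ k : Fin l,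
      dftKer l j k * (starRingEnd ℂ) (dftKer l j' k) = η ^ k.1 := by
    intro k
    simp only [dftKer_eq_pow, map_pow, hconj, hη, mul_pow, inv_pow, ← pow_mul]
  have hsum : ∑ k : Fin l, dftKer l j k * (starRingEnd ℂ) (dftKer l j' k)
      = ∑ k ∈ Finset.range l, η ^ k := by
    rw [← Fin.sum_univ_eq_sum_range fun k => η ^ k]
    exact Finset.sum_congr rfl fun k _ => hterm k
  rw [hsum]
  by_cases h : j = j'
  · subst h
    have : η = 1 := by
      rw [hη, mul_inv_cancel₀ (pow_ne_zero _ hne)]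
    simp [this]
  · have hηne : η ≠ 1 := by
      intro hc
      apply h
      have : dftZeta l ^ j.1 = dftZeta l ^ j'.1 := by
        rw [hη, mul_inv_eq_one₀ (pow_ne_zero _ hne)] at hc
        exact hc
      exact Fin.ext (hζ.pow_inj j.2 j'.2 this)
    have hz : ∀ a : ℕ, (dftZeta l ^ a) ^ l = 1 := fun a => by
      rw [← pow_mul, mul_comm, pow_mul, dftZeta_pow_l, one_pow]
    have hηl : η ^ l = 1 := by
      rw [hη, mul_pow, inv_pow, hz, hz, inv_one, mul_one]
    rw [geom_sum_eq hηne, hηl, sub_self, zero_div, if_neg h]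

/-- Scalar Parseval. -/
lemma parseval_scalar (l : ℕ) [NeZero l] (c : Fin l → ℝ) :
    ∑ k : Fin l, Complex.normSq (∑ j : Fin l, dftKer l j k * (c j : ℂ))
      = l * ∑ j : Fin l, (c j) ^ 2 := by
  have key : (∑ k : Fin l, (Complex.normSq (∑ j : Fin l, dftKer l j k * (c j : ℂ)) : ℂ))
      = (l : ℂ) * ∑ j : Fin l, ((c j : ℂ)) ^ 2 := by
    have expand : ∀ k : Fin l,
        (Complex.normSq (∑ j : Fin l, dftKer l j k * (c j : ℂ)) : ℂ)
        = ∑ j : Fin l, ∑ j' : Fin l,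
            (c j : ℂ) * (c j' : ℂ) * (dftKer l j k * (starRingEnd ℂ) (dftKer l j' k)) := by
      intro k
      rw [← Complex.mul_conj]
      rw [map_sum, Finset.sum_mul_sum]
      refine Finset.sum_congr rfl fun j _ => Finset.sum_congr rfl fun j' _ => ?_
      rw [map_mul, Complex.conj_ofReal]
      ring
    rw [Finset.sum_congr rfl fun k _ => expand k]
    rw [Finset.sum_comm]
    have : ∀ j : Fin l, ∑ k : Fin l, ∑ j' : Fin l,
        (c j : ℂ) * (c j' : ℂ) * (dftKer l j k * (starRingEnd ℂ) (dftKer l j' k))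
        = (l : ℂ) * (c j : ℂ) ^ 2 := by
      intro j
      rw [Finset.sum_comm]
      have : ∀ j' : Fin l, ∑ k : Fin l,
          (c j : ℂ) * (c j' : ℂ) * (dftKer l j k * (starRingEnd ℂ) (dftKer l j' k))
          = (c j : ℂ) * (c j' : ℂ) * (if j = j' then (l : ℂ) else 0) := by
        intro j'
        rw [← Finset.mul_sum, dftKer_orth]
      rw [Finset.sum_congr rfl fun j' _ => this j']
      simp [Finset.sum_ite_eq]
      ring
    rw [Finset.sum_congr rfl fun j _ => this j, ← Finset.mul_sum]
  exact_mod_cast key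

/-- dft entries via the kernel. -/
lemma dft_apply {α β : Type*} {l : ℕ} (A : Fin l → Matrix α β ℝ) (k : Fin l) (i : α) (j : β) :
    dft A k i j = ∑ j' : Fin l, dftKer l j' k * (A j' i j : ℂ) := by
  rw [dft, Matrix.sum_apply]
  exact Finset.sum_congr rfl fun j' _ => by
    simp [dftKer, Matrix.map_apply, Complex.real_smul]

/-- Matrix Parseval. -/
lemma parseval_mat {α β : Type*} [Fintype α] [Fintype β] {l : ℕ} [NeZero l]
    (A : Fin l → Matrix α β ℝ) :
    ∑ k : Fin l, matFrobSqC (dft A k) = l * frobSq A := by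
  have h : ∀ i j, ∑ k : Fin l, Complex.normSq (dft A k i j)
      = l * ∑ k : Fin l, (A k i j) ^ 2 := by
    intro i j
    have := parseval_scalar l (fun k => A k i j)
    simpa [dft_apply] using this
  have L : (∑ k : Fin l, matFrobSqC (dft A k))
      = ∑ i, ∑ j, ∑ k : Fin l, Complex.normSq (dft A k i j) := by
    unfold matFrobSqC
    rw [Finset.sum_comm]
    exact Finset.sum_congr rfl fun i _ => Finset.sum_comm
  have R : (l : ℝ) * frobSq A = ∑ i, ∑ j, (l : ℝ) * ∑ k : Fin l, (A k i j) ^ 2 := by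
    unfold frobSq
    rw [Finset.sum_comm, Finset.mul_sum]
    refine Finset.sum_congr rfl fun i _ => ?_
    rw [Finset.sum_comm, Finset.mul_sum]
  rw [L, R]
  exact Finset.sum_congr rfl fun i _ => Finset.sum_congr rfl fun j _ => h i j

/-- Convolution theorem for the t-Kronecker product. -/
lemma dft_tkron {α β γ δ : Type*} [Fintype α] [Fintype β] [Fintype γ] [Fintype δ]
    {l : ℕ} [NeZero l]
    (A : Fin l → Matrix α β ℝ) (B : Fin l → Matrix γ δ ℝ) (k : Fin l) :
    dft (tkron A B) k = (dft A k) ⊗ₖ (dft B k) := by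
  ext ⟨i, i'⟩ ⟨j, j'⟩
  rw [Matrix.kroneckerMap_apply, dft_apply, dft_apply, dft_apply]
  have lhs_eq : ∀ s : Fin l, dftKer l s k * ((tkron A B) s (i, i') (j, j') : ℂ)
      = ∑ k' : Fin l, dftKer l s k * ((A (s - k') i j : ℂ) * (B k' i' j' : ℂ)) := by
    intro s
    rw [tkron, Matrix.sum_apply]
    push_cast
    rw [Finset.mul_sum]
    exact Finset.sum_congr rfl fun k' _ => by
      rw [Matrix.kroneckerMap_apply]
      push_cast
      ring
  rw [Finset.sum_congr rfl fun s _ => lhs_eq s, Finset.sum_comm, mul_comm, Finset.sum_mul_sum]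
  refine Finset.sum_congr rfl fun k' _ => ?_
  rw [← Equiv.sum_comp (Equiv.addRight k') (fun s => dftKer l s k *
      ((A (s - k') i j : ℂ) * (B k' i' j' : ℂ)))]
  refine Finset.sum_congr rfl fun t _ => ?_
  simp only [Equiv.coe_addRight, add_sub_cancel_right]
  rw [dftKer_add]
  ring

/-- Frobenius norm of a Kronecker product of complex matrices. -/
lemma matFrobSqC_kron {α β γ δ : Type*} [Fintype α] [Fintype β] [Fintype γ] [Fintype δ]
    (M : Matrix α β ℂ) (N : Matrix γ δ ℂ) :
    matFrobSqC (M ⊗ₖ N) = matFrobSqC M * matFrobSqC N := by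
  unfold matFrobSqC
  rw [Fintype.sum_prod_type, Finset.sum_mul_sum]
  refine Finset.sum_congr rfl fun i _ => ?_
  refine Finset.sum_congr rfl fun i' _ => ?_
  rw [Fintype.sum_prod_type, Finset.sum_mul_sum]
  refine Finset.sum_congr rfl fun j _ => Finset.sum_congr rfl fun j' _ => ?_
  rw [Matrix.kroneckerMap_apply, Complex.normSq_mul]

end Aux

theorem frobSq_tkron {m₁ n₁ m₂ n₂ l : ℕ} [NeZero l]
    (A : Fin l → Matrix (Fin m₁) (Fin n₁) ℝ) (B : Fin l → Matrix (Fin m₂) (Fin n₂) ℝ) :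
    frobSq (tkron A B) =
      (1 / (l : ℝ)) * ∑ k : Fin l, matFrobSqC (dft A k) * matFrobSqC (dft B k) := by
  have hl : (l : ℝ) ≠ 0 := Nat.cast_ne_zero.mpr (NeZero.ne l)
  have h1 : ∑ k : Fin l, matFrobSqC (dft (tkron A B) k) = l * frobSq (tkron A B) :=
    parseval_mat (tkron A B)
  have h2 : ∑ k : Fin l, matFrobSqC (dft (tkron A B) k)
      = ∑ k : Fin l, matFrobSqC (dft A k) * matFrobSqC (dft B k) := by
    refine Finset.sum_congr rfl fun k _ => ?_
    rw [dft_tkron, matFrobSqC_kron]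
  rw [← h2, h1]
  field_simp
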